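/- As α → ∞, α·c₁(α) converges to 2√(2/π), where c₁(α) = (2/√π)·∫_{−b₀(α)}^{b₀(α)} e^{−x²}·cos(√2·x·α) dx − e^{−α²/2} and b₀(α) = π/(2√2·α). Equivalently, lim_{α→∞} α·∫_{−b₀(α)}^{b₀(α)} e^{−x²}·cos(√2·x·α) dx = √2. -/

import Mathlib

open Real

/-- Optimal homodyne binning parameter `b₀(α) = π / (2√2 α)`. -/
noncomputable def b0 (α : ℝ) : ℝ := π / (2 * Real.sqrt 2 * α)

/-- Homodyne interference coefficient at perfect transmission:
`c₁(α) = (2/√π)·∫_{−b₀}^{b₀} e^{−x²} cos(√2 x α) dx − e^{−α²/2}`. -/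
noncomputable def c1 (α : ℝ) : ℝ :=
  (2 / Real.sqrt π) *
      (∫ x in (-b0 α)..(b0 α), Real.exp (-x ^ 2) * Real.cos (Real.sqrt 2 * x * α))
    - Real.exp (-α ^ 2 / 2)

noncomputable def gI (α : ℝ) : ℝ :=
  ∫ u in (-(π/2))..(π/2), Real.exp (-(u / (Real.sqrt 2 * α)) ^ 2) * Real.cos u

lemma sqrt2_pos : (0:ℝ) < Real.sqrt 2 := Real.sqrt_pos.mpr (by norm_num)

lemma key (α : ℝ) (hα : 0 < α) :
    α * ∫ x in (-b0 α)..(b0 α), Real.exp (-x ^ 2) * Real.cos (Real.sqrt 2 * x * α)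
      = (Real.sqrt 2)⁻¹ * gI α := by
  have h2 := sqrt2_pos
  have hc : Real.sqrt 2 * α ≠ 0 := by positivity
  have hI : (∫ x in (-b0 α)..(b0 α), Real.exp (-x ^ 2) * Real.cos (Real.sqrt 2 * x * α))
      = ∫ x in (-b0 α)..(b0 α),
          (fun u => Real.exp (-(u / (Real.sqrt 2 * α)) ^ 2) * Real.cos u)
            ((Real.sqrt 2 * α) * x) := by
    apply intervalIntegral.integral_congr
    intro x _
    simp only
    rw [mul_div_cancel_left₀ _ hc]
    ring_nf
  rw [hI, intervalIntegral.integral_comp_mul_left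
    (fun u => Real.exp (-(u / (Real.sqrt 2 * α)) ^ 2) * Real.cos u) hc]
  have hb1 : Real.sqrt 2 * α * (-b0 α) = -(π/2) := by
    rw [b0]
    field_simp
  have hb2 : Real.sqrt 2 * α * (b0 α) = π/2 := by
    rw [b0]
    field_simp
  rw [hb1, hb2, smul_eq_mul, gI, mul_inv]
  have hα' : α ≠ 0 := ne_of_gt hα
  field_simp

lemma gI_tendsto : Filter.Tendsto gI Filter.atTop (nhds 2) := by
  have hupper : ∀ α : ℝ, 0 < α → gI α ≤ 2 := by
    intro α hα
    have := intervalIntegral.integral_mono_on (a := -(π/2)) (b := π/2)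
      (f := fun u => Real.exp (-(u / (Real.sqrt 2 * α)) ^ 2) * Real.cos u)
      (g := fun u => Real.cos u) (μ := MeasureTheory.volume) (by linarith [Real.pi_pos])
      (by apply Continuous.intervalIntegrable; continuity)
      (by apply Continuous.intervalIntegrable; continuity)
      ?_
    · have h2 : (∫ u in (-(π/2))..(π/2), Real.cos u) = 2 := by
        rw [integral_cos]; norm_num
      rw [gI]
      exact le_trans this (le_of_eq h2)
    · intro x hx
      have hcos : 0 ≤ Real.cos x := by
        apply Real.cos_nonneg_of_mem_Icc
        constructor <;> [exact hx.1; exact hx.2]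
      have : Real.exp (-(x / (Real.sqrt 2 * α)) ^ 2) ≤ 1 := by
        rw [Real.exp_le_one_iff]
        exact neg_nonpos.mpr (sq_nonneg _)
      calc Real.exp (-(x / (Real.sqrt 2 * α)) ^ 2) * Real.cos x
          ≤ 1 * Real.cos x := by gcongr
        _ = Real.cos x := one_mul _
  have hlower : ∀ α : ℝ, 0 < α →
      Real.exp (-(π/2 / (Real.sqrt 2 * α)) ^ 2) * 2 ≤ gI α := by
    intro α hα
    have hc : (0:ℝ) < Real.sqrt 2 * α := by positivity
    have := intervalIntegral.integral_mono_on (a := -(π/2)) (b := π/2)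
      (f := fun u => Real.exp (-(π/2 / (Real.sqrt 2 * α)) ^ 2) * Real.cos u)
      (g := fun u => Real.exp (-(u / (Real.sqrt 2 * α)) ^ 2) * Real.cos u)
      (μ := MeasureTheory.volume) (by linarith [Real.pi_pos])
      (by apply Continuous.intervalIntegrable; continuity)
      (by apply Continuous.intervalIntegrable; continuity)
      ?_
    · calc Real.exp (-(π/2 / (Real.sqrt 2 * α)) ^ 2) * 2
          = ∫ u in (-(π/2))..(π/2),
              Real.exp (-(π/2 / (Real.sqrt 2 * α)) ^ 2) * Real.cos u := by
            rw [intervalIntegral.integral_const_mul, integral_cos]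
            norm_num
        _ ≤ gI α := le_trans this (le_of_eq rfl)
    · intro x hx
      have hcos : 0 ≤ Real.cos x := by
        apply Real.cos_nonneg_of_mem_Icc
        constructor <;> [exact hx.1; exact hx.2]
      have habs : |x| ≤ π/2 := abs_le.mpr ⟨hx.1, hx.2⟩
      have hsq : (x / (Real.sqrt 2 * α)) ^ 2 ≤ (π/2 / (Real.sqrt 2 * α)) ^ 2 := by
        rw [div_pow, div_pow]
        have hx2 : x ^ 2 ≤ (π/2)^2 := by
          rw [← sq_abs x]
          exact pow_le_pow_left₀ (abs_nonneg x) habs 2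
        exact (div_le_div_iff_of_pos_right (by positivity)).mpr hx2
      exact mul_le_mul_of_nonneg_right (Real.exp_le_exp.mpr (by linarith)) hcos
  have hexp : Filter.Tendsto
      (fun α : ℝ => Real.exp (-(π/2 / (Real.sqrt 2 * α)) ^ 2) * 2)
      Filter.atTop (nhds 2) := by
    have h1 : Filter.Tendsto (fun α : ℝ => π/2 / (Real.sqrt 2 * α))
        Filter.atTop (nhds 0) := by
      apply Filter.Tendsto.div_atTop tendsto_const_nhds
      exact Filter.Tendsto.const_mul_atTop sqrt2_pos Filter.tendsto_id
    have h2 : Filter.Tendsto (fun α : ℝ => Real.exp (-(π/2 / (Real.sqrt 2 * α)) ^ 2))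
        Filter.atTop (nhds 1) := by
      have h1' := (h1.pow 2).neg
      rw [show -(0:ℝ)^2 = 0 by norm_num] at h1'
      have := (Real.continuous_exp.tendsto 0).comp h1'
      simpa [Function.comp_def, Real.exp_zero] using this
    simpa using h2.mul_const 2
  apply tendsto_of_tendsto_of_tendsto_of_le_of_le' hexp tendsto_const_nhds
  · filter_upwards [Filter.eventually_gt_atTop 0] with α hα using hlower α hα
  · filter_upwards [Filter.eventually_gt_atTop 0] with α hα using hupper α hα

lemma part2 :
    Filter.Tendsto
      (fun α : ℝ => α *
        ∫ x in (-b0 α)..(b0 α), Real.exp (-x ^ 2) * Real.cos (Real.sqrt 2 * x * α))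
      Filter.atTop (nhds (Real.sqrt 2)) := by
  have h : Filter.Tendsto (fun α : ℝ => (Real.sqrt 2)⁻¹ * gI α)
      Filter.atTop (nhds ((Real.sqrt 2)⁻¹ * 2)) := gI_tendsto.const_mul _
  have heq : (Real.sqrt 2)⁻¹ * 2 = Real.sqrt 2 := by
    rw [inv_mul_eq_div, eq_comm, eq_div_iff (ne_of_gt sqrt2_pos),
      Real.mul_self_sqrt (by norm_num)]
  rw [heq] at h
  apply h.congr'
  filter_upwards [Filter.eventually_gt_atTop 0] with α hα
  exact (key α hα).symm

theorem c1_asymptotics :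
    Filter.Tendsto (fun α : ℝ => α * c1 α) Filter.atTop
      (nhds (2 * Real.sqrt (2 / π))) ∧
    Filter.Tendsto
      (fun α : ℝ => α *
        ∫ x in (-b0 α)..(b0 α), Real.exp (-x ^ 2) * Real.cos (Real.sqrt 2 * x * α))
      Filter.atTop (nhds (Real.sqrt 2)) := by
  refine ⟨?_, part2⟩
  have hexp0 : Filter.Tendsto (fun α : ℝ => α * Real.exp (-α ^ 2 / 2))
      Filter.atTop (nhds 0) := by
    have hb : Filter.Tendsto (fun α : ℝ => α * Real.exp (-α)) Filter.atTop (nhds 0) := by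
      simpa using Real.tendsto_pow_mul_exp_neg_atTop_nhds_zero 1
    apply squeeze_zero' ?_ ?_ hb
    · filter_upwards [Filter.eventually_ge_atTop 0] with α hα
      positivity
    · filter_upwards [Filter.eventually_ge_atTop 2] with α hα
      have : -α ^ 2 / 2 ≤ -α := by nlinarith
      have h1 : Real.exp (-α ^ 2 / 2) ≤ Real.exp (-α) := Real.exp_le_exp.mpr this
      have hα0 : (0:ℝ) ≤ α := by linarith
      exact mul_le_mul_of_nonneg_left h1 hα0
  have hmain : Filter.Tendsto
      (fun α : ℝ => (2 / Real.sqrt π) *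
        (α * ∫ x in (-b0 α)..(b0 α), Real.exp (-x ^ 2) * Real.cos (Real.sqrt 2 * x * α))
        - α * Real.exp (-α ^ 2 / 2))
      Filter.atTop (nhds ((2 / Real.sqrt π) * Real.sqrt 2 - 0)) :=
    (part2.const_mul _).sub hexp0
  have heq : (2 / Real.sqrt π) * Real.sqrt 2 - 0 = 2 * Real.sqrt (2 / π) := by
    rw [sub_zero, Real.sqrt_div (by norm_num : (0:ℝ) ≤ 2) π]
    ring
  rw [heq] at hmain
  apply hmain.congr
  intro α
  simp only [c1]
  ring
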